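/- Let Z be an F-subspace of F^{n+1} contained in H₀ with dim Z = k ≤ n. Then the number of subspaces X ∈ B∂(n+1) with X ∩ H₀ = Z equals q^{n−k}. -/

import Mathlib

open Module

noncomputable def H0 (F : Type) [Field F] (n : ℕ) : Submodule F (Fin (n + 1) → F) :=
  LinearMap.ker (LinearMap.proj (R := F) (φ := fun _ : Fin (n + 1) => F) (Fin.last n))

def gmap (F : Type) [Field F] (n : ℕ) (a : Fin n → F) :
    (Fin (n + 1) → F) →ₗ[F] (Fin (n + 1) → F) where
  toFun v := v + v (Fin.last n) • (Fin.snoc a 0 : Fin (n + 1) → F)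
  map_add' u v := by
    funext i
    simp only [Pi.add_apply, Pi.smul_apply, smul_eq_mul]
    ring
  map_smul' c v := by
    funext i
    simp only [Pi.add_apply, Pi.smul_apply, smul_eq_mul, RingHom.id_apply]
    ring

lemma mem_H0_iff (F : Type) [Field F] (n : ℕ) (v : Fin (n + 1) → F) :
    v ∈ H0 F n ↔ v (Fin.last n) = 0 := by
  simp [H0, LinearMap.mem_ker]

lemma finrank_H0 (F : Type) [Field F] (n : ℕ) : finrank F ↥(H0 F n) = n := by
  rw [H0]
  have hs : Function.Surjective
      (LinearMap.proj (R := F) (φ := fun _ : Fin (n + 1) => F) (Fin.last n)) := by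
    intro c; exact ⟨fun _ => c, rfl⟩
  have := LinearMap.finrank_range_add_finrank_ker
    (LinearMap.proj (R := F) (φ := fun _ : Fin (n + 1) => F) (Fin.last n))
  rw [LinearMap.range_eq_top.mpr hs, finrank_top] at this
  have h1 : finrank F (Fin (n + 1) → F) = n + 1 := by
    simp [finrank_fintype_fun_eq_card]
  have h2 : finrank F F = 1 := finrank_self F
  simp only [finrank_fintype_fun_eq_card, Fintype.card_fin, finrank_self] at this ⊢
  omega

set_option synthInstance.maxHeartbeats 1000000 in
set_option maxHeartbeats 1000000 in
theorem stmt_9 (q n k : ℕ) (F : Type) [Field F] [Fintype F] (hq : Fintype.card F = q)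
    (Z : Submodule F (Fin (n + 1) → F)) (hZ : Z ≤ H0 F n) (hdim : finrank F ↥Z = k)
    (hk : k ≤ n) :
    Nat.card {X : Submodule F (Fin (n + 1) → F) // ¬ X ≤ H0 F n ∧ X ⊓ H0 F n = Z} =
      q ^ (n - k) := by
  classical
  set e : Fin (n + 1) → F := Pi.single (Fin.last n) 1 with he
  have helast : e (Fin.last n) = 1 := by simp [he]
  set Z' : Submodule F ↥(H0 F n) := Z.comap (H0 F n).subtype with hZ'
  -- the map
  set toX : ↥(H0 F n) → Submodule F (Fin (n + 1) → F) :=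
    fun w => Z ⊔ (F ∙ (w.1 + e)) with htoX
  have hwlast : ∀ w : ↥(H0 F n), (w.1 + e) (Fin.last n) = 1 := by
    intro w
    have := (mem_H0_iff F n w.1).mp w.2
    simp [this, helast]
  have hprop : ∀ w : ↥(H0 F n), ¬ toX w ≤ H0 F n ∧ toX w ⊓ H0 F n = Z := by
    intro w
    constructor
    · intro hle
      have hmem : w.1 + e ∈ toX w :=
        le_sup_right (a := Z) (Submodule.mem_span_singleton_self _)
      have := (mem_H0_iff F n _).mp (hle hmem)
      rw [hwlast w] at this
      exact one_ne_zero this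
    · apply le_antisymm
      · rintro x ⟨hx1, hx2⟩
        rcases Submodule.mem_sup.mp hx1 with ⟨z, hz, y, hy, rfl⟩
        rcases Submodule.mem_span_singleton.mp hy with ⟨c, rfl⟩
        have hzl := (mem_H0_iff F n z).mp (hZ hz)
        have hxl := (mem_H0_iff F n _).mp hx2
        have hc : c = 0 := by
          have hw0 := (mem_H0_iff F n w.1).mp w.2
          simp only [Pi.add_apply, Pi.smul_apply, smul_eq_mul] at hxl
          rw [hzl, hw0, helast] at hxl
          simpa using hxl
        simpa [hc] using hz
      · exact le_inf le_sup_left hZ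
  -- injectivity modulo Z'
  have hinj : ∀ w w' : ↥(H0 F n), toX w = toX w' ↔ w - w' ∈ Z' := by
    intro w w'
    constructor
    · intro h
      have hmem : w.1 + e ∈ toX w' := by
        rw [← h]; exact le_sup_right (a := Z) (Submodule.mem_span_singleton_self _)
      rcases Submodule.mem_sup.mp hmem with ⟨z, hz, y, hy, hsum⟩
      rcases Submodule.mem_span_singleton.mp hy with ⟨c, rfl⟩
      have hc : c = 1 := by
        have h1 := congrFun hsum (Fin.last n)
        have hzl := (mem_H0_iff F n z).mp (hZ hz)
        have hw0 := (mem_H0_iff F n w.1).mp w.2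
        have hw0' := (mem_H0_iff F n w'.1).mp w'.2
        simp only [Pi.add_apply, Pi.smul_apply, smul_eq_mul] at h1
        rw [hzl, hw0, hw0', helast] at h1
        simpa using h1
      subst hc
      have hz' : (w - w').1 = z := by
        simp only [one_smul] at hsum
        have h2 : z = w.1 + e - (w'.1 + e) := by rw [← hsum]; abel
        rw [AddSubgroupClass.coe_sub, h2]
        abel
      simp only [hZ', Submodule.mem_comap, Submodule.coe_subtype, hz']
      exact hz
    · intro h
      have key : ∀ a b : ↥(H0 F n), a - b ∈ Z' → toX a ≤ toX b := by
        intro a b hab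
        have hmem : a.1 + e ∈ toX b := by
          have : a.1 + e = (a.1 - b.1) + (b.1 + e) := by abel
          rw [this]
          exact Submodule.add_mem _ (le_sup_left (b := F ∙ (b.1 + e)) hab)
            (le_sup_right (a := Z) (Submodule.mem_span_singleton_self _))
        exact sup_le (le_sup_left) ((Submodule.span_singleton_le_iff_mem _ _).mpr hmem)
      exact le_antisymm (key w w' h) (key w' w (by simpa using Z'.neg_mem h))
  -- surjectivity
  have hsurj : ∀ X : Submodule F (Fin (n + 1) → F), ¬ X ≤ H0 F n → X ⊓ H0 F n = Z →
      ∃ w : ↥(H0 F n), toX w = X := by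
    intro X hX1 hX2
    rcases SetLike.not_le_iff_exists.mp hX1 with ⟨x, hxX, hxH⟩
    have hxl : x (Fin.last n) ≠ 0 := fun h => hxH ((mem_H0_iff F n x).mpr h)
    set x' : Fin (n + 1) → F := (x (Fin.last n))⁻¹ • x with hx'
    have hx'X : x' ∈ X := X.smul_mem _ hxX
    have hx'l : x' (Fin.last n) = 1 := by
      simp [hx', inv_mul_cancel₀ hxl]
    have hwH : x' - e ∈ H0 F n := by
      rw [mem_H0_iff]
      simp [hx'l, helast]
    refine ⟨⟨x' - e, hwH⟩, ?_⟩
    have hxe : (x' - e) + e = x' := by abel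
    rw [htoX]
    simp only [hxe]
    apply le_antisymm
    · refine sup_le ?_ ((Submodule.span_singleton_le_iff_mem _ _).mpr hx'X)
      rw [← hX2]; exact inf_le_left
    · intro y hy
      have h1 : y - y (Fin.last n) • x' ∈ X :=
        X.sub_mem hy (X.smul_mem _ hx'X)
      have h2 : y - y (Fin.last n) • x' ∈ H0 F n := by
        rw [mem_H0_iff]
        simp [hx'l]
      have h3 : y - y (Fin.last n) • x' ∈ Z := by
        rw [← hX2]; exact ⟨h1, h2⟩
      have : y = (y - y (Fin.last n) • x') + y (Fin.last n) • x' := by abel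
      rw [this]
      exact Submodule.add_mem _ (le_sup_left (b := F ∙ x') h3)
        (le_sup_right (a := Z) (Submodule.smul_mem _ _ (Submodule.mem_span_singleton_self _)))
  -- build the equivalence with the quotient
  have hequiv : Nonempty ((↥(H0 F n) ⧸ Z') ≃
      {X : Submodule F (Fin (n + 1) → F) // ¬ X ≤ H0 F n ∧ X ⊓ H0 F n = Z}) := by
    refine ⟨Equiv.ofBijective
      (fun c => Quotient.liftOn' c (fun w => ⟨toX w, hprop w⟩) ?_) ⟨?_, ?_⟩⟩
    · intro a b hab
      have : a - b ∈ Z' := by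
        exact (Submodule.quotientRel_def Z').mp hab
      exact Subtype.ext ((hinj a b).mpr this)
    · intro a b
      induction a using Quotient.inductionOn'
      induction b using Quotient.inductionOn'
      intro h
      have := (hinj _ _).mp (congrArg Subtype.val h)
      exact Quotient.sound' ((Submodule.quotientRel_def Z').mpr this)
    · rintro ⟨X, hX1, hX2⟩
      rcases hsurj X hX1 hX2 with ⟨w, hw⟩
      exact ⟨Quotient.mk'' w, Subtype.ext hw⟩
  -- cardinality computation
  rcases hequiv with ⟨eqv⟩
  rw [← Nat.card_congr eqv]
  have hZ'rank : finrank F ↥Z' = k := by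
    rw [← hdim]
    exact (Submodule.comapSubtypeEquivOfLe hZ).finrank_eq
  have hquot : finrank F (↥(H0 F n) ⧸ Z') = n - k := by
    have := Submodule.finrank_quotient_add_finrank Z'
    rw [hZ'rank, finrank_H0] at this
    omega
  haveI : Module.Finite F (↥(H0 F n) ⧸ Z') := Module.Finite.quotient F Z'
  haveI : Fintype (↥(H0 F n) ⧸ Z') := Fintype.ofFinite _
  rw [Nat.card_eq_fintype_card, card_eq_pow_finrank (K := F), hq, hquot]
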